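/- Let G be a maximally connected graph (κ(G) = δ(G)) with δ(G) ≥ 3, |V(G)| ≥ 2(δ(G)−h)+3, and suppose the maximum number C(G) of common neighbors of any two distinct vertices of G satisfies C(G) ≤ δ(G) − 2. Then t_h^e(G) = δ(G) − h under the MM* model for 0 ≤ h ≤ ⌊(δ(G)−1)/2⌋. -/

import Mathlib

open SimpleGraph Finset

variable {V : Type*}

/-- The vertex connectivity of a finite simple graph: the minimum size of a vertex set
whose removal leaves a graph that is disconnected or has at most one vertex. -/
noncomputable def vConn [Fintype V] (G : SimpleGraph V) : ℕ :=
  sInf {n | ∃ S : Finset V, S.card = n ∧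
    (((↑S : Set V)ᶜ).Subsingleton ∨ ¬ (G.induce ((↑S : Set V)ᶜ)).Connected)}


/-- Two fault sets are distinguishable under the MM* model (Sengupta–Dahbura). -/
def mmDistinguishable [DecidableEq V] (G : SimpleGraph V) (F1 F2 : Finset V) : Prop :=
  (∃ u w v : V, u ∉ F1 ∪ F2 ∧ w ∉ F1 ∪ F2 ∧ v ∈ (F1 \ F2) ∪ (F2 \ F1) ∧ G.Adj u v ∧ G.Adj u w) ∨
  (∃ u v w : V, u ∈ F1 \ F2 ∧ v ∈ F1 \ F2 ∧ u ≠ v ∧ w ∉ F1 ∪ F2 ∧ G.Adj u w ∧ G.Adj v w) ∨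
  (∃ u v w : V, u ∈ F2 \ F1 ∧ v ∈ F2 \ F1 ∧ u ≠ v ∧ w ∉ F1 ∪ F2 ∧ G.Adj u w ∧ G.Adj v w)

/-- A graph is $s$-diagnosable under the MM* model. -/
def mmDiagnosable [DecidableEq V] (G : SimpleGraph V) (s : ℕ) : Prop :=
  ∀ F1 F2 : Finset V, F1 ≠ F2 → F1.card ≤ s → F2.card ≤ s → mmDistinguishable G F1 F2

/-- The $h$-edge tolerable diagnosability under the MM* model. -/
noncomputable def mmTolDiag [Fintype V] [DecidableEq V] (G : SimpleGraph V) (h : ℕ) : ℕ :=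
  sSup {s | ∀ Fe : Finset (Sym2 V), ↑Fe ⊆ G.edgeSet → Fe.card ≤ h →
    mmDiagnosable (G.deleteEdges ↑Fe) s}

section Helpers

variable {V : Type*}

private lemma arith (δ h s d p MS mD SS SD : ℤ)
 (hδ : 3 ≤ δ) (hh : 2*h+1 ≤ δ) (hh0 : 0 ≤ h)
 (hs0 : 0 ≤ s) (hs : s + h + 1 ≤ δ)
 (hd1 : 1 ≤ d) (hd2 : d ≤ 2*(δ - h - s))
 (hp : 2*(δ-h) + 3 ≤ p + s + d)
 (h1 : MS^2 ≤ s*SS) (h2 : mD^2 ≤ d*SD)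
 (h3 : SS + SD ≤ p*(p-1)*(δ-2) + MS + mD)
 (h4 : p*δ ≤ MS + mD + 2*h)
 (h5 : MS ≤ p*s) (h7 : mD ≤ 2*p) : False := by
  have hp3 : s + 3 ≤ p := by linarith
  have key : p*(δ-s-2) ≤ 2*h := by nlinarith
  rcases le_or_gt s (δ-3) with hcase | hcase
  · nlinarith [mul_nonneg (by linarith : (0:ℤ) ≤ δ - s - 3) (by linarith : (0:ℤ) ≤ p - s - 3)]
  · have hs1 : 1 ≤ s := by linarith
    have hh1 : h ≤ 1 := by linarith
    have hX : (0:ℤ) ≤ p*(p-1)*(δ-2) :=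
      mul_nonneg (mul_nonneg (by linarith) (by linarith)) (by linarith)
    have hbig : d*MS^2 + s*mD^2 ≤ s*d*(p*(p-1)*(δ-2) + MS + mD) := by
      nlinarith [mul_le_mul_of_nonneg_left h1 (by linarith : (0:ℤ) ≤ d),
        mul_le_mul_of_nonneg_left h2 (by linarith : (0:ℤ) ≤ s),
        mul_le_mul_of_nonneg_left h3 (by positivity : (0:ℤ) ≤ s*d)]
    have hsd : (0:ℤ) < s*d := mul_pos (by linarith) (by linarith)
    have hq : (MS+mD)^2 ≤ (s+d)*(p*(p-1)*(δ-2) + MS + mD) := by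
      have hCS : s*d*((MS+mD)^2) ≤ s*d*((s+d)*(p*(p-1)*(δ-2) + MS + mD)) := by
        nlinarith [sq_nonneg (d*MS - s*mD), mul_le_mul_of_nonneg_left hbig (by linarith : (0:ℤ) ≤ s+d)]
      exact le_of_mul_le_mul_left hCS hsd
    have hT3 : (s+3)*3 ≤ p*δ := mul_le_mul hp3 hδ (by norm_num) (by linarith)
    have hMT : 0 ≤ (MS+mD - (p*δ-2*h)) * (MS+mD + (p*δ-2*h) - (s+d)) := by
      apply mul_nonneg (by linarith) (by nlinarith)
    have e1 : (MS+mD)^2 + (s+d)*(p*δ-2*h) - ((p*δ-2*h)^2 + (s+d)*(MS+mD))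
        = (MS+mD - (p*δ-2*h)) * (MS+mD + (p*δ-2*h) - (s+d)) := by ring
    have hM : (p*δ-2*h)^2 ≤ (s+d)*(p*(p-1)*(δ-2) + p*δ - 2*h) := by
      have h2' : (s+d)*(p*(p-1)*(δ-2) + MS+mD) = (s+d)*(p*(p-1)*(δ-2)) + (s+d)*(MS+mD) := by ring
      have h3' : (s+d)*(p*(p-1)*(δ-2) + p*δ - 2*h) = (s+d)*(p*(p-1)*(δ-2)) + (s+d)*(p*δ-2*h) := by ring
      linarith [hq, hMT, e1]
    have hqbar : s + d ≤ δ + 2 - 2*h := by linarith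
    have hfin : (p*δ-2*h)^2 ≤ (δ+2-2*h)*(p*(p-1)*(δ-2) + p*δ - 2*h) := by
      have h1' : (s+d)*(p*(p-1)*(δ-2) + p*δ - 2*h) ≤ (δ+2-2*h)*(p*(p-1)*(δ-2) + p*δ - 2*h) := by
        apply mul_le_mul_of_nonneg_right hqbar (by linarith)
      linarith
    interval_cases h
    · have idt : (p*δ-2*0)^2 - (δ+2-2*0)*(p*(p-1)*(δ-2) + p*δ - 2*0) = 2*p*(2*p-δ-2) := by ring
      linarith [hfin, idt, mul_pos (by linarith : (0:ℤ) < p) (by linarith : (0:ℤ) < 2*p - δ - 2)]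
    · have idt : (p*δ-2*1)^2 - (δ+2-2*1)*(p*(p-1)*(δ-2) + p*δ - 2*1) = 2*δ*(p^2-3*p+1)+4 := by ring
      have hp0 : (0:ℤ) ≤ p*(p-3) := mul_nonneg (by linarith) (by linarith)
      have : (0:ℤ) ≤ p^2 - 3*p + 1 := by linarith [hp0]
      linarith [hfin, idt, mul_nonneg (by linarith : (0:ℤ) ≤ 2*δ) this]

private lemma swap_count [Fintype V] [DecidableEq V] (H : SimpleGraph V) [DecidableRel H.Adj]
    (A B : Finset V) :
    ∑ u ∈ A, (B.filter (fun v => H.Adj u v)).card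
      = ∑ x ∈ B, (A.filter (fun v => H.Adj x v)).card := by
  simp only [Finset.card_filter]
  rw [Finset.sum_comm]
  exact Finset.sum_congr rfl fun x _ => Finset.sum_congr rfl fun u _ => by
    simp only [SimpleGraph.adj_comm]


private lemma induce_delete_eq (H : SimpleGraph V) (A : Set V) (x y : V) (hx : x ∉ A) :
    (H.deleteEdges {s(x,y)}).induce A = H.induce A := by
  ext a b
  simp only [SimpleGraph.comap_adj, Function.Embedding.coe_subtype,
    SimpleGraph.deleteEdges_adj, Set.mem_singleton_iff]
  constructor
  · rintro ⟨h1, _⟩; exact h1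
  · intro h1
    refine ⟨h1, fun hcon => ?_⟩
    rw [Sym2.eq_iff] at hcon
    rcases hcon with ⟨rfl, rfl⟩ | ⟨rfl, rfl⟩
    · exact hx a.2
    · exact hx b.2

private lemma base_conn [Fintype V] (G : SimpleGraph V) [DecidableRel G.Adj]
    (hmax : vConn G = G.minDegree) (T : Finset V) (hT : T.card + 1 ≤ G.minDegree) :
    (G.induce ((↑T : Set V)ᶜ)).Connected := by
  by_contra hc
  have : vConn G ≤ T.card := Nat.sInf_le ⟨T, rfl, Or.inr hc⟩
  omega

private lemma conn_del [Fintype V] [DecidableEq V] (G : SimpleGraph V) [DecidableRel G.Adj]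
    (hmax : vConn G = G.minDegree) (hbig : G.minDegree + 3 ≤ Fintype.card V)
    (Fe : Finset (Sym2 V)) :
    ↑Fe ⊆ G.edgeSet → ∀ T : Finset V, T.card + Fe.card + 1 ≤ G.minDegree →
      ((G.deleteEdges ↑Fe).induce ((↑T : Set V)ᶜ)).Connected := by
  induction Fe using Finset.induction_on with
  | empty =>
    intro _ T hT
    rw [Finset.coe_empty, SimpleGraph.deleteEdges_empty]
    exact base_conn G hmax T (by simpa using hT)
  | @insert e Fe' hnm ih =>
    intro hsub T hT
    have hsub' : ↑Fe' ⊆ G.edgeSet := fun z hz => hsub (by simp [hz])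
    have hcard : (insert e Fe').card = Fe'.card + 1 := Finset.card_insert_of_notMem hnm
    have hedge : e ∈ G.edgeSet := hsub (by simp)
    revert hedge hT hsub
    induction e using Sym2.ind with
    | _ x y =>
    intro hsub hT hedge
    have hxy : G.Adj x y := hedge
    have hne : x ≠ y := hxy.ne
    have hrw : G.deleteEdges ↑(insert s(x,y) Fe') = (G.deleteEdges ↑Fe').deleteEdges {s(x,y)} := by
      rw [SimpleGraph.deleteEdges_deleteEdges]
      congr 1
      rw [Finset.coe_insert, Set.insert_eq, Set.union_comm]
    set H := G.deleteEdges ↑Fe' with hH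
    by_cases hx : x ∈ T
    · rw [hrw, induce_delete_eq H _ x y (by simp [hx])]
      exact ih hsub' T (by omega)
    · by_cases hy : y ∈ T
      · rw [hrw, Sym2.eq_swap, induce_delete_eq H _ y x (by simp [hy])]
        exact ih hsub' T (by omega)
      · have hA := ih hsub' (insert x T)
          (by have := Finset.card_insert_le x T; omega)
        have hB := ih hsub' (insert y T)
          (by have := Finset.card_insert_le y T; omega)
        have hAeq : ((H.deleteEdges {s(x,y)}).induce ((↑(insert x T) : Set V)ᶜ))
            = H.induce ((↑(insert x T) : Set V)ᶜ) :=
          induce_delete_eq H _ x y (by simp)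
        have hBeq : ((H.deleteEdges {s(x,y)}).induce ((↑(insert y T) : Set V)ᶜ))
            = H.induce ((↑(insert y T) : Set V)ᶜ) := by
          rw [Sym2.eq_swap]
          exact induce_delete_eq H _ y x (by simp)
        have hunion : ((↑(insert x T) : Set V)ᶜ) ∪ ((↑(insert y T) : Set V)ᶜ)
            = ((↑T : Set V)ᶜ) := by
          rw [← Set.compl_inter]
          congr 1
          ext a
          simp only [Finset.coe_insert, Set.mem_inter_iff, Set.mem_insert_iff,
            Finset.mem_coe]
          constructor
          · rintro ⟨rfl | ha, h2⟩
            · rcases h2 with h2 | h2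
              · exact absurd h2 hne
              · exact h2
            · exact ha
          · intro ha; exact ⟨Or.inr ha, Or.inr ha⟩
        have hinter : (((↑(insert x T) : Set V)ᶜ) ∩ ((↑(insert y T) : Set V)ᶜ)).Nonempty := by
          have hcc : (insert x T ∪ insert y T).card < Fintype.card V := by
            have hsub2 : insert x T ∪ insert y T ⊆ insert x (insert y T) := by
              intro z hz
              simp only [Finset.mem_union, Finset.mem_insert] at hz ⊢
              tauto
            have h1 := Finset.card_le_card hsub2
            have h2 := Finset.card_insert_le x (insert y T)
            have h3 := Finset.card_insert_le y T
            omega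
          have : ((insert x T ∪ insert y T)ᶜ : Finset V).Nonempty := by
            rw [← Finset.card_pos, Finset.card_compl]
            omega
          obtain ⟨a, ha⟩ := this
          rw [Finset.mem_compl, Finset.mem_union] at ha
          push_neg at ha
          obtain ⟨ha1, ha2⟩ := ha
          simp only [Finset.mem_insert] at ha1 ha2
          push_neg at ha1 ha2
          refine ⟨a, ?_, ?_⟩ <;>
            simp only [Set.mem_compl_iff, Finset.coe_insert, Set.mem_insert_iff,
              Finset.mem_coe] <;> tauto
        rw [hrw, ← hunion]
        apply SimpleGraph.induce_union_connected
        · rw [hAeq]; exact hA.preconnected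
        · rw [hBeq]; exact hB.preconnected
        · exact hinter

private lemma walk_to_D [DecidableEq V] (G' : SimpleGraph V) {C : Set V}
    (Uset Dset : Finset V)
    (hCU : ∀ z : V, z ∈ C → (z ∈ Uset ∨ z ∈ Dset))
    (hDU : ∀ z : V, ¬(z ∈ Uset ∧ z ∈ Dset))
    (hno : ¬ ∃ x y z : V, x ∈ Uset ∧ y ∈ Dset ∧ z ∈ Uset ∧ G'.Adj x y ∧ G'.Adj x z) :
    ∀ (a b : C) (_ : (G'.induce C).Walk a b), ↑b ∈ Dset → ↑a ∈ Uset →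
      (∃ z, z ∈ Uset ∧ G'.Adj ↑a z) → False := by
  intro a b W
  induction W with
  | nil => intro hb ha _; exact hDU _ ⟨ha, hb⟩
  | @cons a c b hadj W ih =>
    intro hb ha hz
    have hac : G'.Adj ↑a ↑c := by
      simpa using hadj
    by_cases hcD : ↑c ∈ Dset
    · obtain ⟨z, hzU, hazadj⟩ := hz
      exact hno ⟨↑a, ↑c, z, ha, hcD, hzU, hac, hazadj⟩
    · have hcU : ↑c ∈ Uset := (hCU _ c.2).resolve_right hcD
      exact ih hb hcU ⟨↑a, ha, hac.symm⟩

private lemma degree_del [Fintype V] [DecidableEq V] (G : SimpleGraph V) [DecidableRel G.Adj]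
    (Fe : Finset (Sym2 V)) [DecidableRel (G.deleteEdges ↑Fe).Adj] (u : V) :
    G.degree u ≤ (G.deleteEdges ↑Fe).degree u + (Fe.filter (fun e => u ∈ e)).card := by
  classical
  set L := G.neighborFinset u \ (G.deleteEdges ↑Fe).neighborFinset u with hL
  have hsub : G.neighborFinset u ⊆ (G.deleteEdges ↑Fe).neighborFinset u ∪ L := by
    intro v hv
    rw [Finset.mem_union, hL, Finset.mem_sdiff]
    tauto
  have hLcard : L.card ≤ (Fe.filter (fun e => u ∈ e)).card := by
    apply Finset.card_le_card_of_injOn (fun v => s(u,v))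
    · intro v hv
      rw [Finset.mem_coe, Finset.mem_sdiff, SimpleGraph.mem_neighborFinset,
        SimpleGraph.mem_neighborFinset, SimpleGraph.deleteEdges_adj] at hv
      rw [Finset.mem_coe, Finset.mem_filter]
      refine ⟨?_, Sym2.mem_mk_left u v⟩
      have := hv.2
      push_neg at this
      exact this hv.1
    · intro v₁ _ v₂ _ hvv
      exact Sym2.congr_right.mp hvv
  calc G.degree u ≤ ((G.deleteEdges ↑Fe).neighborFinset u ∪ L).card :=
        Finset.card_le_card hsub
    _ ≤ (G.deleteEdges ↑Fe).degree u + L.card := Finset.card_union_le _ _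
    _ ≤ _ := by omega

private lemma sum_incident [Fintype V] [DecidableEq V] (G : SimpleGraph V)
    (Fe : Finset (Sym2 V)) (hFe : ↑Fe ⊆ G.edgeSet) :
    ∑ u : V, (Fe.filter (fun e => u ∈ e)).card = 2 * Fe.card := by
  have key : ∀ e ∈ Fe, (∑ u : V, if u ∈ e then 1 else 0) = 2 := by
    intro e he
    have hedge : e ∈ G.edgeSet := hFe he
    revert hedge
    induction e using Sym2.ind with
    | _ x y =>
      intro hedge
      have hne : x ≠ y := ((G.mem_edgeSet).mp hedge).ne
      have hfe : (Finset.univ.filter (fun u => u ∈ s(x,y))) = {x, y} := by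
        ext a
        simp [Sym2.mem_iff]
      rw [← Finset.card_filter, hfe, Finset.card_insert_of_notMem (by simp [hne]),
        Finset.card_singleton]
  simp only [Finset.card_filter]
  rw [Finset.sum_comm, Finset.sum_congr rfl key, Finset.sum_const, smul_eq_mul,
    Nat.mul_comm]

private lemma offdiag_count [Fintype V] [DecidableEq V] (H : SimpleGraph V)
    [DecidableRel H.Adj] (Q U : Finset V) (K : ℕ)
    (hK : ∀ u v : V, u ≠ v → (Q.filter (fun x => H.Adj x u ∧ H.Adj x v)).card ≤ K) :
    ∑ x ∈ Q, ((U.filter (fun v => H.Adj x v)).card * (U.filter (fun v => H.Adj x v)).card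
      - (U.filter (fun v => H.Adj x v)).card) ≤ (U.card * U.card - U.card) * K := by
  have hfilter : ∀ x, (U.filter (fun v => H.Adj x v)).offDiag
      = U.offDiag.filter (fun p => H.Adj x p.1 ∧ H.Adj x p.2) := by
    intro x
    ext p
    simp only [Finset.mem_offDiag, Finset.mem_filter]
    tauto
  calc ∑ x ∈ Q, ((U.filter (fun v => H.Adj x v)).card * (U.filter (fun v => H.Adj x v)).card
      - (U.filter (fun v => H.Adj x v)).card)
      = ∑ x ∈ Q, (U.offDiag.filter (fun p => H.Adj x p.1 ∧ H.Adj x p.2)).card := by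
        refine Finset.sum_congr rfl fun x _ => ?_
        rw [← Finset.offDiag_card, hfilter]
    _ = ∑ p ∈ U.offDiag, (Q.filter (fun x => H.Adj x p.1 ∧ H.Adj x p.2)).card := by
        simp only [Finset.card_filter]
        rw [Finset.sum_comm]
    _ ≤ ∑ p ∈ U.offDiag, K := by
        refine Finset.sum_le_sum fun p hp => ?_
        exact hK p.1 p.2 (Finset.mem_offDiag.mp hp).2.2
    _ = (U.card * U.card - U.card) * K := by
        rw [Finset.sum_const, smul_eq_mul, Finset.offDiag_card]

set_option maxHeartbeats 1000000 in
private lemma lower [Fintype V] [DecidableEq V] (G : SimpleGraph V) [DecidableRel G.Adj]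
    (hmax : vConn G = G.minDegree) (hδ : 3 ≤ G.minDegree)
    (hC : ∀ u v : V, u ≠ v →
      (G.neighborFinset u ∩ G.neighborFinset v).card ≤ G.minDegree - 2)
    (h : ℕ) (hh : h ≤ (G.minDegree - 1) / 2)
    (hV : 2 * (G.minDegree - h) + 3 ≤ Fintype.card V)
    (Fe : Finset (Sym2 V)) (hFe : ↑Fe ⊆ G.edgeSet) (hFc : Fe.card ≤ h) :
    mmDiagnosable (G.deleteEdges ↑Fe) (G.minDegree - h) := by
  intro F1 F2 hne hc1 hc2
  by_contra hnd
  set δ := G.minDegree with hδdef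
  have hh2 : 2 * h + 1 ≤ δ := by omega
  set G' := G.deleteEdges ↑Fe with hG'
  haveI hdec : DecidableRel G'.Adj := fun a b =>
    decidable_of_iff (G.Adj a b ∧ s(a,b) ∉ Fe)
      (by rw [hG', SimpleGraph.deleteEdges_adj]; simp)
  have hn1 : ¬ (∃ u w v : V, u ∉ F1 ∪ F2 ∧ w ∉ F1 ∪ F2 ∧ v ∈ (F1 \ F2) ∪ (F2 \ F1) ∧
      G'.Adj u v ∧ G'.Adj u w) := fun ha => hnd (Or.inl ha)
  have hn2 : ¬ (∃ u v w : V, u ∈ F1 \ F2 ∧ v ∈ F1 \ F2 ∧ u ≠ v ∧ w ∉ F1 ∪ F2 ∧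
      G'.Adj u w ∧ G'.Adj v w) := fun ha => hnd (Or.inr (Or.inl ha))
  have hn3 : ¬ (∃ u v w : V, u ∈ F2 \ F1 ∧ v ∈ F2 \ F1 ∧ u ≠ v ∧ w ∉ F1 ∪ F2 ∧
      G'.Adj u w ∧ G'.Adj v w) := fun ha => hnd (Or.inr (Or.inr ha))
  set S := F1 ∩ F2 with hS
  set D1 := F1 \ F2 with hD1
  set D2 := F2 \ F1 with hD2
  set Dd := D1 ∪ D2 with hDd
  set U := (F1 ∪ F2)ᶜ with hU
  -- cardinal facts
  have hscard : S.card + 1 ≤ δ - h := by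
    by_cases hSF1 : S = F1
    · have hsub : F1 ⊆ F2 := by
        rw [← Finset.inter_eq_left]; rw [hS] at hSF1; exact hSF1
      have hss : F1 ⊂ F2 := ssubset_of_subset_of_ne hsub hne
      have := Finset.card_lt_card hss
      rw [hSF1]
      omega
    · have hss : S ⊂ F1 := ssubset_of_subset_of_ne Finset.inter_subset_left hSF1
      have := Finset.card_lt_card hss
      omega
  have hD1card : D1.card + S.card = F1.card := Finset.card_sdiff_add_card_inter F1 F2
  have hD2card : D2.card + S.card = F2.card := by
    rw [hS, Finset.inter_comm]; exact Finset.card_sdiff_add_card_inter F2 F1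
  have hDdcard : Dd.card = D1.card + D2.card :=
    Finset.card_union_of_disjoint (disjoint_sdiff_sdiff)
  have hDdpos : 1 ≤ Dd.card := by
    rcases Finset.eq_empty_or_nonempty Dd with hDe | hDn
    · exfalso
      rw [hDd, Finset.union_eq_empty] at hDe
      exact hne (Finset.Subset.antisymm
        ((Finset.sdiff_eq_empty_iff_subset).mp hDe.1)
        ((Finset.sdiff_eq_empty_iff_subset).mp hDe.2))
    · exact Finset.card_pos.mpr hDn
  have hpart : U.card + S.card + Dd.card = Fintype.card V := by
    have h1 : U.card = Fintype.card V - (F1 ∪ F2).card := Finset.card_compl _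
    have h2 : (F1 ∪ F2).card + (F1 ∩ F2).card = F1.card + F2.card :=
      Finset.card_union_add_card_inter F1 F2
    rw [← hS] at h2
    have h3 : (F1 ∪ F2).card ≤ Fintype.card V := (F1 ∪ F2).card_le_univ
    omega
  -- no edges within U
  have hCU : ∀ z : V, z ∈ ((↑S : Set V)ᶜ) → (z ∈ U ∨ z ∈ Dd) := by
    intro z hz
    simp only [Set.mem_compl_iff, Finset.mem_coe, hS, Finset.mem_inter] at hz
    simp only [hU, hDd, hD1, hD2, Finset.mem_compl, Finset.mem_union, Finset.mem_sdiff]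
    tauto
  have hDU : ∀ z : V, ¬(z ∈ U ∧ z ∈ Dd) := by
    intro z
    simp only [hU, hDd, hD1, hD2, Finset.mem_compl, Finset.mem_union, Finset.mem_sdiff]
    tauto
  have hno : ¬ ∃ x y z : V, x ∈ U ∧ y ∈ Dd ∧ z ∈ U ∧ G'.Adj x y ∧ G'.Adj x z := by
    rintro ⟨x, y, z, hx, hy, hz, a1, a2⟩
    exact hn1 ⟨x, z, y, Finset.mem_compl.mp hx, Finset.mem_compl.mp hz, hy, a1, a2⟩
  obtain ⟨v0, hv0⟩ := Finset.card_pos.mp hDdpos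
  have noUU : ∀ u u', u ∈ U → u' ∈ U → ¬ G'.Adj u u' := by
    intro u u' hu hu' hadj
    have hbig' : δ + 3 ≤ Fintype.card V := by omega
    have hconn := conn_del G hmax hbig' Fe hFe S (by omega)
    have huC : (u : V) ∈ ((↑S : Set V)ᶜ) := by
      have := Finset.mem_compl.mp hu
      simp only [Set.mem_compl_iff, Finset.mem_coe, hS, Finset.mem_inter]
      rw [hU, Finset.mem_compl, Finset.mem_union] at hu
      tauto
    have hv0C : (v0 : V) ∈ ((↑S : Set V)ᶜ) := by
      simp only [Set.mem_compl_iff, Finset.mem_coe, hS, Finset.mem_inter]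
      rw [hDd, Finset.mem_union, hD1, hD2] at hv0
      rcases hv0 with hv | hv <;> rw [Finset.mem_sdiff] at hv <;> tauto
    obtain ⟨W⟩ := hconn.preconnected ⟨u, huC⟩ ⟨v0, hv0C⟩
    exact walk_to_D G' U Dd hCU hDU hno _ _ W hv0 hu ⟨u', hu', hadj⟩
  -- ≤ 1 neighbors in D1 and D2
  have hnD1 : ∀ u ∈ U, (D1.filter (fun v => G'.Adj u v)).card ≤ 1 := by
    intro u hu
    by_contra hgt
    push_neg at hgt
    obtain ⟨a, ha, b, hb, hab⟩ := Finset.one_lt_card.mp hgt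
    rw [Finset.mem_filter] at ha hb
    exact hn2 ⟨a, b, u, ha.1, hb.1, hab, Finset.mem_compl.mp hu, ha.2.symm, hb.2.symm⟩
  have hnD2 : ∀ u ∈ U, (D2.filter (fun v => G'.Adj u v)).card ≤ 1 := by
    intro u hu
    by_contra hgt
    push_neg at hgt
    obtain ⟨a, ha, b, hb, hab⟩ := Finset.one_lt_card.mp hgt
    rw [Finset.mem_filter] at ha hb
    exact hn3 ⟨a, b, u, ha.1, hb.1, hab, Finset.mem_compl.mp hu, ha.2.symm, hb.2.symm⟩
  -- degree lower bound split
  have hdeg : ∀ u ∈ U, δ ≤ (S.filter (fun v => G'.Adj u v)).card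
      + ((Dd.filter (fun v => G'.Adj u v)).card + (Fe.filter (fun e => u ∈ e)).card) := by
    intro u hu
    have h1 := G.minDegree_le_degree u
    have h2 : G.degree u ≤ G'.degree u + (Fe.filter (fun e => u ∈ e)).card :=
      degree_del G Fe u
    have hsubN : G'.neighborFinset u ⊆ (S.filter (fun v => G'.Adj u v))
        ∪ (Dd.filter (fun v => G'.Adj u v)) := by
      intro v hv
      rw [SimpleGraph.mem_neighborFinset] at hv
      have hvU : v ∉ U := fun hvU => noUU u v hu hvU hv
      rw [Finset.mem_union, Finset.mem_filter, Finset.mem_filter]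
      rw [hU, Finset.mem_compl, not_not, Finset.mem_union] at hvU
      simp only [hS, hDd, hD1, hD2, Finset.mem_inter, Finset.mem_union, Finset.mem_sdiff]
      tauto
    have h3 : G'.degree u ≤ (S.filter (fun v => G'.Adj u v)).card
        + (Dd.filter (fun v => G'.Adj u v)).card :=
      (Finset.card_le_card hsubN).trans (Finset.card_union_le _ _)
    omega
  -- sums
  have hsum4 : U.card * δ ≤ (∑ u ∈ U, (S.filter (fun v => G'.Adj u v)).card)
      + (∑ u ∈ U, (Dd.filter (fun v => G'.Adj u v)).card) + 2*h := by
    have e0 : U.card * δ = ∑ _u ∈ U, δ := by rw [Finset.sum_const, smul_eq_mul]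
    have e1 : ∑ _u ∈ U, δ ≤ ∑ u ∈ U, ((S.filter (fun v => G'.Adj u v)).card
        + ((Dd.filter (fun v => G'.Adj u v)).card + (Fe.filter (fun e => u ∈ e)).card)) :=
      Finset.sum_le_sum hdeg
    rw [Finset.sum_add_distrib, Finset.sum_add_distrib] at e1
    have e2 : ∑ u ∈ U, (Fe.filter (fun e => u ∈ e)).card
        ≤ ∑ u : V, (Fe.filter (fun e => u ∈ e)).card :=
      Finset.sum_le_sum_of_subset (Finset.subset_univ U)
    have e3 := sum_incident G Fe hFe
    omega
  have hsum5 : (∑ u ∈ U, (S.filter (fun v => G'.Adj u v)).card) ≤ U.card * S.card := by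
    calc (∑ u ∈ U, (S.filter (fun v => G'.Adj u v)).card) ≤ ∑ _u ∈ U, S.card :=
          Finset.sum_le_sum fun u _ => Finset.card_filter_le _ _
      _ = U.card * S.card := by rw [Finset.sum_const, smul_eq_mul]
  have hsum7 : (∑ u ∈ U, (Dd.filter (fun v => G'.Adj u v)).card) ≤ 2 * U.card := by
    calc (∑ u ∈ U, (Dd.filter (fun v => G'.Adj u v)).card) ≤ ∑ _u ∈ U, 2 := by
          refine Finset.sum_le_sum fun u hu => ?_
          have e1 : Dd.filter (fun v => G'.Adj u v)
              = (D1.filter (fun v => G'.Adj u v)) ∪ (D2.filter (fun v => G'.Adj u v)) := by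
            rw [hDd, Finset.filter_union]
          rw [e1]
          have := Finset.card_union_le (D1.filter (fun v => G'.Adj u v))
            (D2.filter (fun v => G'.Adj u v))
          have := hnD1 u hu
          have := hnD2 u hu
          omega
      _ = 2 * U.card := by rw [Finset.sum_const, smul_eq_mul, Nat.mul_comm]
  have hswapS : (∑ u ∈ U, (S.filter (fun v => G'.Adj u v)).card)
      = ∑ x ∈ S, (U.filter (fun v => G'.Adj x v)).card := swap_count G' U S
  have hswapD : (∑ u ∈ U, (Dd.filter (fun v => G'.Adj u v)).card)
      = ∑ x ∈ Dd, (U.filter (fun v => G'.Adj x v)).card := swap_count G' U Dd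
  have hcount : (∑ x ∈ S, ((U.filter (fun v => G'.Adj x v)).card
        * (U.filter (fun v => G'.Adj x v)).card - (U.filter (fun v => G'.Adj x v)).card))
      + (∑ x ∈ Dd, ((U.filter (fun v => G'.Adj x v)).card
        * (U.filter (fun v => G'.Adj x v)).card - (U.filter (fun v => G'.Adj x v)).card))
      ≤ (U.card * U.card - U.card) * (δ - 2) := by
    have hK : ∀ u v : V, u ≠ v →
        ((F1 ∪ F2).filter (fun x => G'.Adj x u ∧ G'.Adj x v)).card ≤ δ - 2 := by
      intro u v huv
      have hsub : (F1 ∪ F2).filter (fun x => G'.Adj x u ∧ G'.Adj x v)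
          ⊆ G.neighborFinset u ∩ G.neighborFinset v := by
        intro x hx
        rw [Finset.mem_filter] at hx
        have e1 : G.Adj x u := by
          have := hx.2.1; rw [hG', SimpleGraph.deleteEdges_adj] at this; exact this.1
        have e2 : G.Adj x v := by
          have := hx.2.2; rw [hG', SimpleGraph.deleteEdges_adj] at this; exact this.1
        rw [Finset.mem_inter, SimpleGraph.mem_neighborFinset, SimpleGraph.mem_neighborFinset]
        exact ⟨e1.symm, e2.symm⟩
      exact (Finset.card_le_card hsub).trans (hC u v huv)
    have hmain := offdiag_count G' (F1 ∪ F2) U (δ - 2) hK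
    have hQ : F1 ∪ F2 = S ∪ Dd := by
      ext z
      simp only [hS, hDd, hD1, hD2, Finset.mem_inter, Finset.mem_union, Finset.mem_sdiff]
      tauto
    have hdisj : Disjoint S Dd := by
      rw [Finset.disjoint_left]
      intro z hz
      simp only [hS, Finset.mem_inter] at hz
      simp only [hDd, hD1, hD2, Finset.mem_union, Finset.mem_sdiff]
      tauto
    rw [hQ, Finset.sum_union hdisj] at hmain
    exact hmain
  -- cast to ℤ and conclude
  refine arith (δ : ℤ) (h : ℤ) (S.card : ℤ) (Dd.card : ℤ) (U.card : ℤ)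
    ((∑ x ∈ S, (U.filter (fun v => G'.Adj x v)).card : ℕ) : ℤ)
    ((∑ x ∈ Dd, (U.filter (fun v => G'.Adj x v)).card : ℕ) : ℤ)
    ((∑ x ∈ S, ((U.filter (fun v => G'.Adj x v)).card)^2 : ℕ) : ℤ)
    ((∑ x ∈ Dd, ((U.filter (fun v => G'.Adj x v)).card)^2 : ℕ) : ℤ)
    (by exact_mod_cast hδ) (by exact_mod_cast hh2) (by positivity) (by positivity)
    (by exact_mod_cast (by omega : S.card + h + 1 ≤ δ)) (by exact_mod_cast hDdpos)
    (by push_cast; omega) (by push_cast [Nat.cast_sub (by omega : h ≤ δ)]; omega)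
    ?_ ?_ ?_ (by exact_mod_cast hsum4.trans_eq (by rw [hswapS, hswapD]) : _)
    ?_ (by exact_mod_cast hswapD ▸ hsum7)
  · -- CS for S
    push_cast
    exact sq_sum_le_card_mul_sum_sq
  · -- CS for D
    push_cast
    exact sq_sum_le_card_mul_sum_sq
  · -- h3 from hcount
    have hle : ∀ (x : V), (U.filter (fun v => G'.Adj x v)).card
        ≤ (U.filter (fun v => G'.Adj x v)).card * (U.filter (fun v => G'.Adj x v)).card := by
      intro x
      rcases Nat.eq_zero_or_pos (U.filter (fun v => G'.Adj x v)).card with h0 | h0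
      · simp [h0]
      · calc (U.filter (fun v => G'.Adj x v)).card
            = (U.filter (fun v => G'.Adj x v)).card * 1 := by ring
          _ ≤ _ := Nat.mul_le_mul_left _ h0
    have hterm : ∀ (A : Finset V),
        (∑ x ∈ A, ((U.filter (fun v => G'.Adj x v)).card * (U.filter (fun v => G'.Adj x v)).card
          - (U.filter (fun v => G'.Adj x v)).card))
        + (∑ x ∈ A, (U.filter (fun v => G'.Adj x v)).card)
        = ∑ x ∈ A, ((U.filter (fun v => G'.Adj x v)).card)^2 := by
      intro A
      rw [← Finset.sum_add_distrib]
      refine Finset.sum_congr rfl fun x _ => ?_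
      have := hle x
      rw [pow_two]
      omega
    have hple : U.card ≤ U.card * U.card := by
      rcases Nat.eq_zero_or_pos U.card with h0 | h0
      · simp [h0]
      · calc U.card = U.card * 1 := by ring
          _ ≤ _ := Nat.mul_le_mul_left _ h0
    have h3n : (∑ x ∈ S, ((U.filter (fun v => G'.Adj x v)).card)^2)
        + (∑ x ∈ Dd, ((U.filter (fun v => G'.Adj x v)).card)^2)
        ≤ (U.card * U.card - U.card) * (δ - 2)
          + ((∑ x ∈ S, (U.filter (fun v => G'.Adj x v)).card)
            + (∑ x ∈ Dd, (U.filter (fun v => G'.Adj x v)).card)) := by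
      have e1 := hterm S
      have e2 := hterm Dd
      omega
    have hc2' : (((U.card * U.card - U.card) * (δ - 2) : ℕ) : ℤ)
        = ((U.card : ℤ) * (U.card : ℤ) - U.card) * ((δ : ℤ) - 2) := by
      push_cast [Nat.cast_sub hple, Nat.cast_sub (by omega : 2 ≤ δ)]
      ring
    have h3z := (Nat.cast_le (α := ℤ)).mpr h3n
    push_cast at h3z
    rw [Nat.cast_sub hple, Nat.cast_sub (by omega : 2 ≤ δ)] at h3z
    push_cast at h3z
    push_cast
    linarith [h3z]
  · exact_mod_cast hswapS ▸ hsum5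

private lemma upper [Fintype V] [DecidableEq V] (G : SimpleGraph V) [DecidableRel G.Adj]
    [Nonempty V] (h : ℕ) (hhδ : h ≤ G.minDegree) :
    ∃ Fe : Finset (Sym2 V), ↑Fe ⊆ G.edgeSet ∧ Fe.card ≤ h ∧
      ¬ mmDiagnosable (G.deleteEdges ↑Fe) (G.minDegree - h + 1) := by
  obtain ⟨u, hu⟩ := G.exists_minimal_degree_vertex
  have hdeg : G.degree u = G.minDegree := hu.symm
  obtain ⟨W, hWsub, hWcard⟩ := Finset.exists_subset_card_eq
    (show h ≤ (G.neighborFinset u).card by rw [SimpleGraph.card_neighborFinset_eq_degree]; omega)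
  refine ⟨W.image (fun w => s(u, w)), ?_, ?_, ?_⟩
  · intro e he
    simp only [Finset.coe_image, Set.mem_image, Finset.mem_coe] at he
    obtain ⟨w, hw, rfl⟩ := he
    exact (SimpleGraph.mem_neighborFinset G u w).mp (hWsub hw)
  · exact (Finset.card_image_le).trans_eq hWcard
  · set Fe := W.image (fun w => s(u, w)) with hFe
    set G' := G.deleteEdges ↑Fe with hG'
    haveI hdec : DecidableRel G'.Adj := fun a b =>
      decidable_of_iff (G.Adj a b ∧ s(a,b) ∉ Fe)
        (by rw [hG', SimpleGraph.deleteEdges_adj]; simp)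
    have hmem_iff : ∀ v : V, (s(u,v) ∈ (↑Fe : Set (Sym2 V))) ↔ ∃ w ∈ W, s(u,w) = s(u,v) := by
      intro v
      rw [Finset.mem_coe, hFe, Finset.mem_image]
    have key : G'.neighborFinset u = G.neighborFinset u \ W := by
      ext v
      rw [SimpleGraph.mem_neighborFinset, Finset.mem_sdiff, SimpleGraph.mem_neighborFinset]
      rw [hG', SimpleGraph.deleteEdges_adj]
      constructor
      · rintro ⟨hadj, hnm⟩
        exact ⟨hadj, fun hvW => hnm ((hmem_iff v).mpr ⟨v, hvW, rfl⟩)⟩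
      · rintro ⟨hadj, hnW⟩
        refine ⟨hadj, fun hm => ?_⟩
        obtain ⟨w, hw, hww⟩ := (hmem_iff v).mp hm
        rw [Sym2.eq_iff] at hww
        rcases hww with ⟨-, rfl⟩ | ⟨huv, -⟩
        · exact hnW hw
        · exact hadj.ne' huv.symm
    have hunotF1 : u ∉ G'.neighborFinset u := fun hmem =>
      G'.irrefl ((SimpleGraph.mem_neighborFinset G' u u).mp hmem)
    have hcard1 : (G'.neighborFinset u).card = G.minDegree - h := by
      rw [key, Finset.card_sdiff_of_subset hWsub, SimpleGraph.card_neighborFinset_eq_degree,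
        hdeg, hWcard]
    have hcard2 : (insert u (G'.neighborFinset u)).card = G.minDegree - h + 1 := by
      rw [Finset.card_insert_of_notMem hunotF1, hcard1]
    have hF12 : G'.neighborFinset u ≠ insert u (G'.neighborFinset u) := by
      intro hcon
      exact hunotF1 (hcon ▸ Finset.mem_insert_self u (G'.neighborFinset u))
    have hsd1 : G'.neighborFinset u \ insert u (G'.neighborFinset u) = ∅ := by
      rw [Finset.sdiff_eq_empty_iff_subset]
      exact Finset.subset_insert u _
    have hsd2 : insert u (G'.neighborFinset u) \ G'.neighborFinset u = {u} := by
      ext a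
      rw [Finset.mem_sdiff, Finset.mem_insert, Finset.mem_singleton]
      constructor
      · rintro ⟨rfl | ha, hna⟩
        · rfl
        · exact absurd ha hna
      · rintro rfl
        exact ⟨Or.inl rfl, hunotF1⟩
    intro hdiag
    have hdist := hdiag (G'.neighborFinset u) (insert u (G'.neighborFinset u)) hF12
      (by omega) (by omega)
    rcases hdist with ⟨a, w, v, ha, hw, hv, adj1, adj2⟩ | ⟨x, y, w, hx, _⟩ |
      ⟨x, y, w, hx, hy, hxy, _⟩
    · rw [hsd1, hsd2] at hv
      simp only [Finset.empty_union, Finset.mem_singleton] at hv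
      subst hv
      exact ha (Finset.mem_union.mpr (Or.inl
        ((SimpleGraph.mem_neighborFinset G' v a).mpr adj1.symm)))
    · rw [hsd1] at hx
      exact absurd hx (Finset.notMem_empty x)
    · rw [hsd2, Finset.mem_singleton] at hx hy
      exact hxy (hx.trans hy.symm)

end Helpers

/-- A maximally connected graph with $δ(G) ≥ 3$, enough vertices, and
$C(G) ≤ δ(G) - 2$ has $t_h^e(G) = δ(G) - h$ under the MM* model. -/
theorem mm_maximally_connected [Fintype V] [DecidableEq V] (G : SimpleGraph V)
    [DecidableRel G.Adj] (hmax : vConn G = G.minDegree) (hδ : 3 ≤ G.minDegree)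
    (hC : ∀ u v : V, u ≠ v →
      (G.neighborFinset u ∩ G.neighborFinset v).card ≤ G.minDegree - 2)
    (h : ℕ) (hh : h ≤ (G.minDegree - 1) / 2)
    (hV : 2 * (G.minDegree - h) + 3 ≤ Fintype.card V) :
    mmTolDiag G h = G.minDegree - h := by
  haveI hne : Nonempty V := Fintype.card_pos_iff.mp (by omega)
  have hhδ : h ≤ G.minDegree := by omega
  obtain ⟨Fe0, hsub0, hc0, hnd0⟩ := upper G h hhδ
  have hmem : (G.minDegree - h) ∈ {s | ∀ Fe : Finset (Sym2 V), ↑Fe ⊆ G.edgeSet →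
      Fe.card ≤ h → mmDiagnosable (G.deleteEdges ↑Fe) s} :=
    fun Fe hFe hFc => lower G hmax hδ hC h hh hV Fe hFe hFc
  have hub : ∀ s ∈ {s | ∀ Fe : Finset (Sym2 V), ↑Fe ⊆ G.edgeSet →
      Fe.card ≤ h → mmDiagnosable (G.deleteEdges ↑Fe) s}, s ≤ G.minDegree - h := by
    intro s hs
    by_contra hcon
    push_neg at hcon
    have hdiag := hs Fe0 hsub0 hc0
    exact hnd0 (fun F1 F2 hne' h1 h2 => hdiag F1 F2 hne' (by omega) (by omega))
  rw [mmTolDiag]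
  exact le_antisymm (csSup_le ⟨_, hmem⟩ hub) (le_csSup ⟨_, hub⟩ hmem)
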